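/- (Theorem 3.5, order-independence of abelian networks) Let N be an abelian network and fix an initial state x.q with x ∈ ℤ^A, q ∈ Q. If w and w' are both complete legal executions for x.q, then: |w| = |w'| in ℕ^A (so w and w' have the same length, the same number of letters processed at each vertex, and the same number of each letter processed), and the final states agree: t_w(q) = t_{w'}(q), hence π_w(x.q) = π_{w'}(x.q). -/

import Mathlib

/-- The letter-count vector `|w| ∈ ℕ^A` of a word `w ∈ A^*`. -/
def lc {A : Type*} [DecidableEq A] (w : List A) : A → ℕ := fun a => w.count a

/-- An abelian-network *data* structure on a directed graph with vertex set `V`, edge set `E`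
(with source and target maps, allowing loops and multiple edges), total alphabet
`A = ⊔_v A_v` (the letter `a` belongs to the alphabet of the vertex `loc a`), and
state space `Q v` for the processor at vertex `v`.  The abelian hypothesis on the
processors is the separate predicate `AbelianNetwork.IsAbelian`. -/
structure AbelianNetwork (V E A : Type*) (Q : V → Type*) [DecidableEq V] [DecidableEq A] where
  /-- source of an edge -/
  src : E → V
  /-- target of an edge -/
  tgt : E → V
  /-- the vertex whose input alphabet contains the letter `a` -/
  loc : A → V
  /-- the (finitely many) outgoing edges of each vertex -/
  outEdges : V → Finset E
  mem_outEdges : ∀ (e : E) (v : V), e ∈ outEdges v ↔ src e = v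
  /-- single-letter transition function `T_v(a, ·)` of the processor at `v = loc a` -/
  trans : (a : A) → Q (loc a) → Q (loc a)
  /-- message-passing function: the word sent along the edge `e` (with `src e = loc a`)
  when the processor at `loc a` processes the letter `a` in state `q` -/
  msg : (e : E) → (a : A) → Q (loc a) → List A
  /-- letters sent along `e` belong to the alphabet of the target of `e` -/
  msg_tgt : ∀ (e : E) (a : A) (q : Q (loc a)), src e = loc a → ∀ b ∈ msg e a q, loc b = tgt e

namespace AbelianNetwork

variable {V E A : Type*} {Q : V → Type*} [DecidableEq V] [DecidableEq A]
variable (N : AbelianNetwork V E A Q)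

/-- The map `t_a : Q → Q` updating the `loc a` coordinate by `T_{loc a}(a, ·)` and
fixing all other coordinates. -/
def tact (a : A) (q : ∀ v, Q v) : ∀ v, Q v :=
  Function.update q (N.loc a) (N.trans a (q (N.loc a)))

/-- `t_w = t_{w_r} ∘ ⋯ ∘ t_{w_1}` for a word `w = w_1 ⋯ w_r`. -/
def tword (w : List A) (q : ∀ v, Q v) : ∀ v, Q v :=
  w.foldl (fun q a => N.tact a q) q

/-- The word sent along the edge `e` when the letters of `w` are processed in order,
starting from the global state `q`.  (Extends the message-passing functions to words.) -/
def msgword (e : E) : List A → (∀ v, Q v) → List A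
  | [], _ => []
  | a :: w, q =>
      (if N.src e = N.loc a then N.msg e a (q (N.loc a)) else []) ++ msgword e w (N.tact a q)

/-- `N(a, q_{loc a}) ∈ ℕ^A`: the vector counting the letters produced when the processor at
`loc a` processes the letter `a`, summed over the outgoing edges of `loc a`. -/
def Nletter (a : A) (q : ∀ v, Q v) : A → ℕ := fun b =>
  ∑ e ∈ N.outEdges (N.loc a), (N.msg e a (q (N.loc a))).count b

/-- `N(w, q) = ∑_i N(w_i, q^{i-1}_{v(i)})` for a word `w = w_1 ⋯ w_r`. -/
def Nword : List A → (∀ v, Q v) → A → ℕ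
  | [], _ => fun _ => 0
  | a :: w, q => fun b => N.Nletter a q b + Nword w (N.tact a q) b

/-- The network is *abelian*: permuting a word input to a single processor does not change
the resulting state and changes each output word only by permuting its letters. -/
def IsAbelian : Prop :=
  ∀ (v : V) (w w' : List A), (∀ a ∈ w, N.loc a = v) → (∀ a ∈ w', N.loc a = v) →
    (w : Multiset A) = (w' : Multiset A) →
    ∀ q : ∀ u, Q u,
      N.tword w q = N.tword w' q ∧
      ∀ e : E, ((N.msgword e w q : Multiset A) = (N.msgword e w' q : Multiset A))

/-- The state transition `π_a(x.q) = (x - 1_a + N(a, q_{loc a})).t_a(q)` of the whole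
network, viewed as a single automaton with states `x.q ∈ ℤ^A × Q`. -/
def piLetter (a : A) (s : (A → ℤ) × (∀ v, Q v)) : (A → ℤ) × (∀ v, Q v) :=
  (fun b => s.1 b - (if b = a then 1 else 0) + (N.Nletter a s.2 b : ℤ), N.tact a s.2)

/-- `π_w = π_{w_r} ∘ ⋯ ∘ π_{w_1}`. -/
def piWord (w : List A) (s : (A → ℤ) × (∀ v, Q v)) : (A → ℤ) × (∀ v, Q v) :=
  w.foldl (fun s a => N.piLetter a s) s

/-- The word `w` is a *legal execution* from `x.q`: each letter is a legal move
(`x_a ≥ 1`) from the state obtained by executing the previous letters. -/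
def Legal : List A → ((A → ℤ) × (∀ v, Q v)) → Prop
  | [], _ => True
  | a :: w, s => 1 ≤ s.1 a ∧ Legal w (N.piLetter a s)

/-- The word `w` is a *complete execution* from `x.q`: after executing `w`,
no letters remain to be processed. -/
def Complete (w : List A) (s : (A → ℤ) × (∀ v, Q v)) : Prop :=
  ∀ a : A, (N.piWord w s).1 a ≤ 0

/-- A canonical word with letter-count vector `u ∈ ℕ^A`. -/
noncomputable def vecWord [Fintype A] (u : A → ℕ) : List A :=
  (Finset.univ : Finset A).toList.flatMap fun a => List.replicate (u a) a

/-- `N(u, q)` for a vector `u ∈ ℕ^A`, defined as `N(w, q)` for a word `w` with `|w| = u`. -/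
noncomputable def Nvec [Fintype A] (u : A → ℕ) (q : ∀ v, Q v) : A → ℕ := N.Nword (vecWord u) q

end AbelianNetwork

namespace AbelianNetwork

section Aux

variable {V E A : Type*} {Q : V → Type*} [DecidableEq V] [DecidableEq A]
variable (N : AbelianNetwork V E A Q)

lemma piWord_cons' (a : A) (w : List A) (s : (A → ℤ) × (∀ v, Q v)) :
    N.piWord (a :: w) s = N.piWord w (N.piLetter a s) := rfl

lemma piWord_append' (w₁ w₂ : List A) (s : (A → ℤ) × (∀ v, Q v)) :
    N.piWord (w₁ ++ w₂) s = N.piWord w₂ (N.piWord w₁ s) :=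
  List.foldl_append

lemma piWord_snd' (w : List A) (x : A → ℤ) (q : ∀ v, Q v) :
    (N.piWord w (x, q)).2 = N.tword w q := by
  induction w generalizing x q with
  | nil => rfl
  | cons a w ih => exact ih _ (N.tact a q)

lemma sum_if_src (F : Finset E) (v : V) (hv : N.outEdges v ⊆ F) (f : E → ℕ) :
    (∑ e ∈ F, if N.src e = v then f e else 0) = ∑ e ∈ N.outEdges v, f e := by
  rw [← Finset.sum_filter]
  apply Finset.sum_congr _ (fun _ _ => rfl)
  ext e
  simp only [Finset.mem_filter, N.mem_outEdges]
  exact ⟨fun h => h.2, fun h => ⟨hv ((N.mem_outEdges e v).2 h), h⟩⟩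

lemma legal_cons (a : A) (w : List A) (s : (A → ℤ) × (∀ v, Q v)) :
    N.Legal (a :: w) s ↔ 1 ≤ s.1 a ∧ N.Legal w (N.piLetter a s) := Iff.rfl

lemma Nword_pair (a b : A) (q : ∀ v, Q v) (c : A) (F : Finset E)
    (hFa : N.outEdges (N.loc a) ⊆ F) (hFb : N.outEdges (N.loc b) ⊆ F) :
    N.Nword [a, b] q c = ∑ e ∈ F, ((N.msgword e [a, b] q).count c) := by
  have h1 := N.sum_if_src F (N.loc a) hFa (fun e => (N.msg e a (q (N.loc a))).count c)
  have h2 := N.sum_if_src F (N.loc b) hFb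
      (fun e => (N.msg e b ((N.tact a q) (N.loc b))).count c)
  simp only [Nword, Nletter, msgword, List.count_append, List.count_nil,
    apply_ite (List.count c), Nat.add_zero, Finset.sum_add_distrib, h1, h2]

lemma swap (hN : N.IsAbelian) (a b : A) (s : (A → ℤ) × (∀ v, Q v)) :
    N.piLetter b (N.piLetter a s) = N.piLetter a (N.piLetter b s) := by
  have key : (N.tact b (N.tact a s.2) = N.tact a (N.tact b s.2)) ∧
      ∀ c, N.Nword [a, b] s.2 c = N.Nword [b, a] s.2 c := by
    by_cases h : N.loc b = N.loc a
    · have hout : N.outEdges (N.loc b) = N.outEdges (N.loc a) := by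
        ext e; simp [N.mem_outEdges, h]
      obtain ⟨ht, hm⟩ := hN (N.loc a) [a, b] [b, a]
        (by intro x hx; simp only [List.mem_cons, List.not_mem_nil, or_false] at hx
            rcases hx with rfl | rfl
            · rfl
            · exact h)
        (by intro x hx; simp only [List.mem_cons, List.not_mem_nil, or_false] at hx
            rcases hx with rfl | rfl
            · exact h
            · rfl)
        (Multiset.coe_eq_coe.2 (List.Perm.swap b a []))
        s.2
      refine ⟨ht, fun c => ?_⟩
      rw [N.Nword_pair a b s.2 c (N.outEdges (N.loc a)) le_rfl (le_of_eq hout),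
        N.Nword_pair b a s.2 c (N.outEdges (N.loc a)) (le_of_eq hout) le_rfl]
      refine Finset.sum_congr rfl fun e _ => ?_
      have := congrArg (Multiset.count c) (hm e)
      simpa using this
    · have h' : N.loc a ≠ N.loc b := fun hh => h hh.symm
      constructor
      · show Function.update _ _ _ = Function.update _ _ _
        simp only [tact, Function.update_of_ne h, Function.update_of_ne h']
        exact Function.update_comm h' _ _ _
      · intro c
        simp [Nword, Nletter, tact, Function.update_of_ne h, Function.update_of_ne h',
          Nat.add_comm]
  obtain ⟨h1, h2⟩ := key
  have h2' : ∀ c, N.Nletter a s.2 c + N.Nletter b (N.tact a s.2) c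
      = N.Nletter b s.2 c + N.Nletter a (N.tact b s.2) c := by
    intro c
    have := h2 c
    simpa [Nword] using this
  simp only [piLetter]
  rw [Prod.mk.injEq]
  refine ⟨funext fun c => ?_, h1⟩
  have := h2' c
  split_ifs <;> omega

lemma piWord_comm (hN : N.IsAbelian) (a : A) (w : List A) (s : (A → ℤ) × (∀ v, Q v)) :
    N.piWord w (N.piLetter a s) = N.piLetter a (N.piWord w s) := by
  induction w generalizing s with
  | nil => rfl
  | cons b w ih =>
    rw [piWord_cons', piWord_cons', N.swap hN a b s, ih]

lemma fst_le_piLetter {a b : A} (h : b ≠ a) (s : (A → ℤ) × (∀ v, Q v)) :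
    s.1 b ≤ (N.piLetter a s).1 b := by
  simp only [piLetter, if_neg h]
  omega

lemma fst_le_piWord {a : A} {w : List A} (ha : a ∉ w) (s : (A → ℤ) × (∀ v, Q v)) :
    s.1 a ≤ (N.piWord w s).1 a := by
  induction w generalizing s with
  | nil => exact le_refl _
  | cons b w ih =>
    have hab : a ≠ b := fun hh => ha (hh ▸ List.mem_cons_self (a := b) (l := w))
    calc s.1 a ≤ (N.piLetter b s).1 a := N.fst_le_piLetter hab s
    _ ≤ _ := ih (fun hh => ha (List.mem_cons_of_mem _ hh)) _

lemma legal_append (w₁ w₂ : List A) (s : (A → ℤ) × (∀ v, Q v)) :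
    N.Legal (w₁ ++ w₂) s ↔ N.Legal w₁ s ∧ N.Legal w₂ (N.piWord w₁ s) := by
  induction w₁ generalizing s with
  | nil => simp [Legal, piWord]
  | cons a w ih => simp [Legal, ih, piWord_cons', and_assoc]

lemma legal_after (hN : N.IsAbelian) (a : A) (u : List A) (s : (A → ℤ) × (∀ v, Q v))
    (hu : N.Legal u s) (hne : ∀ b ∈ u, b ≠ a) :
    N.Legal u (N.piLetter a s) := by
  induction u generalizing s with
  | nil => trivial
  | cons b u ih =>
    obtain ⟨hb, hu⟩ := hu
    refine ⟨?_, ?_⟩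
    · exact le_trans hb (N.fst_le_piLetter (hne b (List.mem_cons_self (a := b) (l := u))) s)
    · rw [N.swap hN a b s]
      exact ih (N.piLetter b s) hu (fun c hc => hne c (List.mem_cons_of_mem _ hc))

lemma split_first {a : A} {w : List A} (hw : a ∈ w) :
    ∃ u v, w = u ++ a :: v ∧ a ∉ u := by
  induction w with
  | nil => simp at hw
  | cons b w ih =>
    by_cases hb : a = b
    · exact ⟨[], w, by simp [hb], by simp⟩
    · have : a ∈ w := by
        rcases List.mem_cons.1 hw with h | h
        · exact absurd h hb
        · exact h
      obtain ⟨u, v, rfl, hu⟩ := ih this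
      exact ⟨b :: u, v, rfl, by simp [hu, hb]⟩

lemma exchange (hN : N.IsAbelian) (a : A) (s : (A → ℤ) × (∀ v, Q v)) (ha : 1 ≤ s.1 a)
    (w : List A) (hl : N.Legal w s) (hc : N.Complete w s) :
    ∃ w₂, ((a :: w₂ : List A) : Multiset A) = (w : Multiset A) ∧
      N.Legal (a :: w₂) s ∧ N.piWord (a :: w₂) s = N.piWord w s := by
  have hmem : a ∈ w := by
    by_contra hmem
    have h1 := N.fst_le_piWord hmem s
    have h2 := hc a
    omega
  obtain ⟨u, v, rfl, hu⟩ := split_first hmem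
  refine ⟨u ++ v, ?_, ?_, ?_⟩
  · exact Multiset.coe_eq_coe.2 (List.perm_middle).symm
  · rw [N.legal_append, N.legal_cons] at hl
    obtain ⟨hlu, _, hlv⟩ := hl
    rw [N.legal_cons]
    refine ⟨ha, ?_⟩
    rw [N.legal_append]
    refine ⟨N.legal_after hN a u s hlu (fun b hb hba => hu (hba ▸ hb)), ?_⟩
    rw [N.piWord_comm hN]
    exact hlv
  · show N.piWord (u ++ v) (N.piLetter a s) = _
    rw [N.piWord_append', N.piWord_append', N.piWord_comm hN, piWord_cons']

lemma main (hN : N.IsAbelian) :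
    ∀ (n : ℕ) (w w' : List A) (s : (A → ℤ) × (∀ v, Q v)), w.length ≤ n →
      N.Legal w s → N.Complete w s → N.Legal w' s → N.Complete w' s →
      (w : Multiset A) = (w' : Multiset A) ∧ N.piWord w s = N.piWord w' s := by
  have nilcase : ∀ (w' : List A) (s : (A → ℤ) × (∀ v, Q v)),
      N.Complete [] s → N.Legal w' s → w' = [] := by
    intro w' s hc hl
    cases w' with
    | nil => rfl
    | cons b w' =>
      exfalso
      have h1 : 1 ≤ s.1 b := ((N.legal_cons b w' s).1 hl).1
      have h2 : s.1 b ≤ 0 := hc b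
      omega
  intro n
  induction n with
  | zero =>
    intro w w' s hlen hwl hwc hw'l hw'c
    have hw : w = [] := List.length_eq_zero_iff.1 (Nat.le_zero.1 hlen)
    subst hw
    rw [nilcase w' s hwc hw'l]
    exact ⟨rfl, rfl⟩
  | succ n ih =>
    intro w w' s hlen hwl hwc hw'l hw'c
    cases w with
    | nil =>
      rw [nilcase w' s hwc hw'l]
      exact ⟨rfl, rfl⟩
    | cons a r =>
      obtain ⟨ha, hr⟩ := (N.legal_cons a r s).1 hwl
      obtain ⟨w₂, hms, hl₂, hpi₂⟩ := N.exchange hN a s ha w' hw'l hw'c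
      obtain ⟨_, hw₂⟩ := (N.legal_cons a w₂ s).1 hl₂
      have hc₂ : N.Complete (a :: w₂) s := fun c => hpi₂ ▸ hw'c c
      have hcr : N.Complete r (N.piLetter a s) := fun c => hwc c
      have hcw₂ : N.Complete w₂ (N.piLetter a s) := fun c => hc₂ c
      obtain ⟨hm, hp⟩ := ih r w₂ (N.piLetter a s) (Nat.succ_le_succ_iff.1 hlen)
        hr hcr hw₂ hcw₂
      constructor
      · rw [← hms]
        simpa using hm
      · rw [piWord_cons', hp, ← piWord_cons', hpi₂]

end Aux

end AbelianNetwork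

/-- **Theorem 3.5 (order-independence of abelian networks).** If `w` and `w'` are both
complete legal executions for `x.q`, then `|w| = |w'|` in `ℕ^A` (so they have the same
length, the same number of letters processed at each vertex, and the same number of each
letter processed), and the final states agree: `t_w(q) = t_{w'}(q)`, hence
`π_w(x.q) = π_{w'}(x.q)`. -/
theorem AbelianNetwork.order_independence {V E A : Type*} {Q : V → Type*}
    [DecidableEq V] [DecidableEq A] (N : AbelianNetwork V E A Q) (hN : N.IsAbelian)
    (x : A → ℤ) (q : ∀ v, Q v) (w w' : List A)
    (hwl : N.Legal w (x, q)) (hwc : N.Complete w (x, q))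
    (hw'l : N.Legal w' (x, q)) (hw'c : N.Complete w' (x, q)) :
    lc w = lc w' ∧
    w.length = w'.length ∧
    (∀ v : V, w.countP (fun a => decide (N.loc a = v)) =
      w'.countP (fun a => decide (N.loc a = v))) ∧
    N.tword w q = N.tword w' q ∧
    N.piWord w (x, q) = N.piWord w' (x, q) := by
  obtain ⟨hm, hp⟩ := N.main hN w.length w w' (x, q) le_rfl hwl hwc hw'l hw'c
  have hperm : w.Perm w' := Multiset.coe_eq_coe.1 hm
  refine ⟨funext fun a => hperm.count_eq a, hperm.length_eq, fun v => hperm.countP_eq _, ?_, hp⟩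
  have h2 := congrArg Prod.snd hp
  rwa [N.piWord_snd', N.piWord_snd'] at h2
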